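/- For every n ≥ 1 and E dividing n, the number of subgroups of exponent E of Z_n × Z_n equals ∑ gcd(i,j), the sum over divisors i, j of E with gcd(E/i, E/j) = 1. -/

import Mathlib

open AddSubgroup

namespace Stmt13

lemma nat_div_dvd_div {a b n : ℕ} (hab : a ∣ b) (hbn : b ∣ n) (hb : b ≠ 0) :
    n / b ∣ n / a := by
  refine ⟨b / a, ?_⟩
  rw [Nat.div_mul_div_comm hbn hab, mul_comm n b, Nat.mul_div_mul_left _ _ (Nat.pos_of_ne_zero hb)]

lemma zmultiples_neg {G : Type*} [AddGroup G] (x : G) : zmultiples (-x) = zmultiples x := by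
  ext y
  simp only [mem_zmultiples_iff]
  constructor
  · rintro ⟨k, rfl⟩; exact ⟨-k, by simp⟩
  · rintro ⟨k, rfl⟩; exact ⟨-k, by simp⟩

variable {n : ℕ}

/-- The canonical element of order `i` in `ZMod n` (for `i ∣ n`). -/
def c (n i : ℕ) : ZMod n := ((n / i : ℕ) : ZMod n)

/-- The canonical subgroup of order `i` of `ZMod n` (for `i ∣ n`). -/
def A (n i : ℕ) : AddSubgroup (ZMod n) := zmultiples (c n i)

lemma addOrderOf_c (hn : n ≠ 0) {i : ℕ} (hi : i ∣ n) : addOrderOf (c n i) = i := by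
  rw [c, ZMod.addOrderOf_coe _ hn, Nat.gcd_eq_right (Nat.div_dvd_of_dvd hi),
    Nat.div_div_self hi hn]

lemma card_A (hn : n ≠ 0) {i : ℕ} (hi : i ∣ n) : Nat.card (A n i) = i := by
  rw [A, Nat.card_zmultiples, addOrderOf_c hn hi]

lemma nsmul_c_eq_zero (hn : n ≠ 0) {i : ℕ} (hi : i ∣ n) : i • (c n i : ZMod n) = 0 := by
  rw [← addOrderOf_dvd_iff_nsmul_eq_zero, addOrderOf_c hn hi]

/-- Every subgroup of `ZMod n` is of the form `A n i` with `i ∣ n`. -/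
lemma exists_eq_A (hn : n ≠ 0) (S : AddSubgroup (ZMod n)) : ∃ i, i ∣ n ∧ S = A n i := by
  obtain ⟨a, ha⟩ := Int.subgroup_cyclic (S.comap (Int.castAddHom (ZMod n)))
  rw [← AddSubgroup.zmultiples_eq_closure] at ha
  have hnmem : (n : ℤ) ∈ S.comap (Int.castAddHom (ZMod n)) := by
    simp only [AddSubgroup.mem_comap, Int.coe_castAddHom, Int.cast_natCast, ZMod.natCast_self]
    exact zero_mem S
  rw [ha, Int.mem_zmultiples_iff] at hnmem
  have hS : S = (zmultiples a).map (Int.castAddHom (ZMod n)) := by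
    rw [← ha, map_comap_eq_self_of_surjective ZMod.intCast_surjective]
  rw [AddMonoidHom.map_zmultiples] at hS
  have hane : a ≠ 0 := by
    rintro rfl
    rw [zero_dvd_iff] at hnmem
    exact hn (by exact_mod_cast hnmem)
  obtain ⟨m, hm⟩ : ∃ m : ℕ, (m : ℤ) = a ∨ (m : ℤ) = -a := by
    rcases Int.natAbs_eq a with h | h
    · exact ⟨a.natAbs, Or.inl h.symm⟩
    · exact ⟨a.natAbs, Or.inr (by omega)⟩
  have hmn : m ∣ n := by
    have h2 : (m : ℤ) ∣ (n : ℤ) := by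
      rcases hm with h | h
      · rw [h]; exact hnmem
      · rw [h]; exact (neg_dvd).mpr hnmem
    exact_mod_cast h2
  have hm0 : m ≠ 0 := by rcases hm with h | h <;> (rintro rfl; simp at h; omega)
  have hcast : zmultiples ((Int.castAddHom (ZMod n)) a) = zmultiples ((m : ℕ) : ZMod n) := by
    have key : ((m : ℕ) : ZMod n) = (((m : ℕ) : ℤ) : ZMod n) := by norm_cast
    rcases hm with h | h
    · rw [key, h]; rfl
    · rw [key, h]
      have h2 : (((-a : ℤ)) : ZMod n) = -((Int.castAddHom (ZMod n)) a) := by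
        simp [Int.coe_castAddHom]
      rw [h2, zmultiples_neg]
  refine ⟨n / m, Nat.div_dvd_of_dvd hmn, ?_⟩
  rw [hS, hcast, A, c, Nat.div_div_self hmn hn]

lemma A_le_A (hn : n ≠ 0) {a b : ℕ} (ha : a ∣ n) (hb : b ∣ n) : A n a ≤ A n b ↔ a ∣ b := by
  constructor
  · intro h
    have := card_dvd_of_le h
    rwa [card_A hn ha, card_A hn hb] at this
  · intro hab
    rw [A, zmultiples_le]
    have hdvd : n / b ∣ n / a :=
      nat_div_dvd_div hab hb (by rintro rfl; exact hn (Nat.eq_zero_of_zero_dvd hb))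
    obtain ⟨t, ht⟩ := hdvd
    refine ⟨(t : ℤ), ?_⟩
    show ((t : ℤ)) • c n b = c n a
    rw [natCast_zsmul, nsmul_eq_mul, c, c, ht]
    push_cast
    ring

lemma A_inj (hn : n ≠ 0) {a b : ℕ} (ha : a ∣ n) (hb : b ∣ n) (h : A n a = A n b) : a = b := by
  have := card_A hn ha
  rw [h, card_A hn hb] at this
  omega

lemma nsmul_c (hn : n ≠ 0) {k j : ℕ} (hk : k ∣ j) (hj : j ∣ n) :
    k • (c n j : ZMod n) = c n (j / k) := by
  have hj0 : j ≠ 0 := by rintro rfl; exact hn (Nat.eq_zero_of_zero_dvd hj)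
  have hjk0 : j / k ≠ 0 := by
    intro h0
    exact hj0 (by rw [← Nat.div_mul_cancel hk, h0, zero_mul])
  have harith : n / (j / k) = k * (n / j) := by
    refine Nat.div_eq_of_eq_mul_left (Nat.pos_of_ne_zero hjk0) ?_
    rw [mul_comm (k * (n/j)) (j/k), ← mul_assoc, Nat.div_mul_cancel hk, Nat.mul_div_cancel' hj]
  rw [c, c, harith]
  push_cast
  rw [nsmul_eq_mul]

/-- The subgroup attached to parameters `(i, j, k, u)`. -/
def f (n i j k u : ℕ) : AddSubgroup (ZMod n × ZMod n) :=
  closure {(c n i, u • c n j), (0, k • c n j)}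

lemma smul_aux (i j k u : ℕ) (s t : ℤ) :
    s • ((c n i, u • c n j) : ZMod n × ZMod n) + t • ((0 : ZMod n), k • c n j) =
      (s • c n i, (s * u + t * k) • c n j) := by
  apply Prod.ext
  · simp
  · show s • (u • c n j) + t • (k • c n j) = (s * (u : ℤ) + t * k) • c n j
    rw [add_smul, mul_smul, mul_smul, natCast_zsmul, natCast_zsmul]

lemma mem_f {i j k u : ℕ} {z : ZMod n × ZMod n} :
    z ∈ f n i j k u ↔ ∃ s t : ℤ, z = (s • c n i, (s * u + t * k) • c n j) := by
  rw [f, AddSubgroup.mem_closure_pair]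
  constructor
  · rintro ⟨s, t, h⟩
    exact ⟨s, t, by rw [← h, smul_aux]⟩
  · rintro ⟨s, t, rfl⟩
    exact ⟨s, t, smul_aux i j k u s t⟩

lemma map_fst_f {i j k u : ℕ} :
    (f n i j k u).map (AddMonoidHom.fst _ _) = A n i := by
  apply le_antisymm
  · rintro x hx
    obtain ⟨⟨x1, x2⟩, hmem, rfl⟩ := AddSubgroup.mem_map.mp hx
    obtain ⟨s, t, h⟩ := mem_f.mp hmem
    exact mem_zmultiples_iff.mpr ⟨s, (congrArg Prod.fst h).symm⟩
  · rintro x hx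
    obtain ⟨s, hs⟩ := mem_zmultiples_iff.mp hx
    exact AddSubgroup.mem_map.mpr
      ⟨(s • c n i, (s * u + 0 * k) • c n j), mem_f.mpr ⟨s, 0, rfl⟩, hs⟩

lemma map_snd_f {i j k u : ℕ} (hcop : Nat.gcd u k = 1) :
    (f n i j k u).map (AddMonoidHom.snd _ _) = A n j := by
  apply le_antisymm
  · rintro y hy
    obtain ⟨⟨x1, x2⟩, hmem, rfl⟩ := AddSubgroup.mem_map.mp hy
    obtain ⟨s, t, h⟩ := mem_f.mp hmem
    exact mem_zmultiples_iff.mpr ⟨s * u + t * k, (congrArg Prod.snd h).symm⟩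
  · rintro y hy
    obtain ⟨m, hm⟩ := mem_zmultiples_iff.mp hy
    have hic : IsCoprime (u : ℤ) (k : ℤ) := by
      rw [Int.isCoprime_iff_gcd_eq_one]; exact_mod_cast hcop
    obtain ⟨a, b, hab⟩ := hic
    refine AddSubgroup.mem_map.mpr
      ⟨((m * a) • c n i, ((m * a) * u + (m * b) * k) • c n j), mem_f.mpr ⟨m * a, m * b, rfl⟩, ?_⟩
    show ((m * a) * u + (m * b) * k) • c n j = y
    rw [← hm]
    congr 1
    linear_combination m * hab

lemma kzsmul_c (hn : n ≠ 0) {k j : ℕ} (hk : k ∣ j) (hj : j ∣ n) :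
    ((k : ℤ)) • (c n j : ZMod n) = c n (j / k) := by
  rw [natCast_zsmul, nsmul_c hn hk hj]

lemma mem_f_inr (hn : n ≠ 0) {i j k u : ℕ} (hi : i ∣ n) (hj : j ∣ n) (hk : k ∣ j) (hki : k ∣ i)
    {y : ZMod n} :
    ((0 : ZMod n), y) ∈ f n i j k u ↔ y ∈ zmultiples (c n (j / k)) := by
  constructor
  · intro h
    obtain ⟨s, t, hst⟩ := mem_f.mp h
    have h0 : s • c n i = 0 := (congrArg Prod.fst hst).symm
    have hy : y = (s * u + t * k) • c n j := congrArg Prod.snd hst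
    have his : ((i : ℕ) : ℤ) ∣ s := by
      rw [← addOrderOf_c hn hi]
      exact addOrderOf_dvd_iff_zsmul_eq_zero.mpr h0
    have hks : ((k : ℕ) : ℤ) ∣ s * u + t * k :=
      dvd_add (((Int.natCast_dvd_natCast.mpr hki).trans his).mul_right _) (Dvd.intro_left t rfl)
    obtain ⟨m, hm⟩ := hks
    refine mem_zmultiples_iff.mpr ⟨m, ?_⟩
    rw [hy, hm, mul_comm (k : ℤ) m, mul_smul, kzsmul_c hn hk hj]
  · intro h
    obtain ⟨m, hm⟩ := mem_zmultiples_iff.mp h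
    refine mem_f.mpr ⟨0, m, ?_⟩
    apply Prod.ext
    · exact (zero_smul ℤ _).symm
    · show y = (0 * u + m * k) • c n j
      rw [← hm, zero_mul, zero_add, mul_smul, kzsmul_c hn hk hj]

lemma exponent_eq_lcm (hn : n ≠ 0) {i j : ℕ} (hi : i ∣ n) (hj : j ∣ n)
    (H : AddSubgroup (ZMod n × ZMod n))
    (h1 : H.map (AddMonoidHom.fst _ _) = A n i) (h2 : H.map (AddMonoidHom.snd _ _) = A n j) :
    AddMonoid.exponent H = Nat.lcm i j := by
  apply Nat.dvd_antisymm
  · apply AddMonoid.exponent_dvd_of_forall_nsmul_eq_zero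
    rintro ⟨⟨x, y⟩, hxy⟩
    have hx : x ∈ A n i := h1 ▸ AddSubgroup.mem_map.mpr ⟨(x, y), hxy, rfl⟩
    have hy : y ∈ A n j := h2 ▸ AddSubgroup.mem_map.mpr ⟨(x, y), hxy, rfl⟩
    obtain ⟨s, hs⟩ := mem_zmultiples_iff.mp hx
    obtain ⟨t, ht⟩ := mem_zmultiples_iff.mp hy
    refine Subtype.ext ?_
    show Nat.lcm i j • ((x, y) : ZMod n × ZMod n) = 0
    have hxz : Nat.lcm i j • x = 0 := by
      obtain ⟨w, hw⟩ := Nat.dvd_lcm_left i j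
      rw [← hs, hw, mul_smul, smul_comm i w, smul_comm i s, nsmul_c_eq_zero hn hi, smul_zero,
        smul_zero]
    have hyz : Nat.lcm i j • y = 0 := by
      obtain ⟨w, hw⟩ := Nat.dvd_lcm_right i j
      rw [← ht, hw, mul_smul, smul_comm j w, smul_comm j t, nsmul_c_eq_zero hn hj, smul_zero,
        smul_zero]
    rw [Prod.smul_mk, hxz, hyz]
    rfl
  · apply Nat.lcm_dvd
    · have hmem : c n i ∈ A n i := mem_zmultiples _
      rw [← h1] at hmem
      obtain ⟨⟨x, y⟩, hxy, hfst⟩ := AddSubgroup.mem_map.mp hmem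
      have h0 : AddMonoid.exponent H • (⟨(x, y), hxy⟩ : H) = 0 :=
        AddMonoid.exponent_nsmul_eq_zero _
      have h0' : AddMonoid.exponent H • ((x, y) : ZMod n × ZMod n) = 0 := congrArg Subtype.val h0
      have hx0 : AddMonoid.exponent H • x = 0 := congrArg Prod.fst h0'
      have := addOrderOf_dvd_of_nsmul_eq_zero hx0
      rwa [show x = c n i from hfst, addOrderOf_c hn hi] at this
    · have hmem : c n j ∈ A n j := mem_zmultiples _
      rw [← h2] at hmem
      obtain ⟨⟨x, y⟩, hxy, hsnd⟩ := AddSubgroup.mem_map.mp hmem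
      have h0 : AddMonoid.exponent H • (⟨(x, y), hxy⟩ : H) = 0 :=
        AddMonoid.exponent_nsmul_eq_zero _
      have h0' : AddMonoid.exponent H • ((x, y) : ZMod n × ZMod n) = 0 := congrArg Subtype.val h0
      have hy0 : AddMonoid.exponent H • y = 0 := congrArg Prod.snd h0'
      have := addOrderOf_dvd_of_nsmul_eq_zero hy0
      rwa [show y = c n j from hsnd, addOrderOf_c hn hj] at this

lemma f_inj (hn : n ≠ 0) {i j k u i' j' k' u' : ℕ}
    (hi : i ∣ n) (hj : j ∣ n) (hki : k ∣ i) (hkj : k ∣ j) (hu : u < k) (hcop : Nat.gcd u k = 1)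
    (hi' : i' ∣ n) (hj' : j' ∣ n) (hki' : k' ∣ i') (hkj' : k' ∣ j') (hu' : u' < k')
    (hcop' : Nat.gcd u' k' = 1)
    (h : f n i j k u = f n i' j' k' u') : i = i' ∧ j = j' ∧ k = k' ∧ u = u' := by
  have hj0 : j ≠ 0 := fun h0 => hn (Nat.eq_zero_of_zero_dvd (h0 ▸ hj))
  have hii : i = i' := A_inj hn hi hi' (by rw [← map_fst_f (n := n) (i := i) (j := j) (k := k) (u := u), h, map_fst_f])
  have hjj : j = j' := A_inj hn hj hj' (by rw [← map_snd_f (n := n) hcop, h, map_snd_f hcop'])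
  subst hii; subst hjj
  have hkk : k = k' := by
    have hdk : j / k ∣ n := (Nat.div_dvd_of_dvd hkj).trans hj
    have hdk' : j / k' ∣ n := (Nat.div_dvd_of_dvd hkj').trans hj
    have hz : (zmultiples (c n (j / k)) : AddSubgroup (ZMod n)) = zmultiples (c n (j / k')) := by
      ext y
      rw [← mem_f_inr (u := u) hn hi hj hkj hki, h, mem_f_inr hn hi hj hkj' hki']
    have := A_inj hn hdk hdk' hz
    have e1 : k = j / (j / k) := (Nat.div_div_self hkj hj0).symm
    rw [e1, this, Nat.div_div_self hkj' hj0]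
  subst hkk
  refine ⟨rfl, rfl, rfl, ?_⟩
  -- recover u
  have hg1 : (c n i, u • c n j) ∈ f n i j k u := by
    refine mem_f.mpr ⟨1, 0, ?_⟩
    apply Prod.ext
    · exact (one_smul ℤ _).symm
    · show u • c n j = ((1 * u + 0 * k : ℤ)) • c n j
      rw [one_mul, zero_mul, add_zero, natCast_zsmul]
  rw [h] at hg1
  obtain ⟨s, t, hst⟩ := mem_f.mp hg1
  have h1 : c n i = s • c n i := congrArg Prod.fst hst
  have h2 : (u : ℕ) • c n j = (s * u' + t * k) • c n j := congrArg Prod.snd hst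
  have his : ((i : ℕ) : ℤ) ∣ s - 1 := by
    rw [← addOrderOf_c hn hi]
    rw [addOrderOf_dvd_iff_zsmul_eq_zero, sub_smul, one_smul, ← h1, sub_self]
  have hjd : ((j : ℕ) : ℤ) ∣ (u : ℤ) - (s * u' + t * k) := by
    rw [← addOrderOf_c hn hj]
    rw [addOrderOf_dvd_iff_zsmul_eq_zero, sub_smul, natCast_zsmul, h2, sub_self]
  have hkd : ((k : ℕ) : ℤ) ∣ (u : ℤ) - (u' : ℤ) := by
    have e : (u : ℤ) - u' = ((u : ℤ) - (s * u' + t * k)) + (s - 1) * u' + t * k := by ring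
    rw [e]
    refine dvd_add (dvd_add ?_ ?_) ⟨t, mul_comm _ _⟩
    · exact (Int.natCast_dvd_natCast.mpr hkj).trans hjd
    · exact (((Int.natCast_dvd_natCast.mpr hki).trans his).mul_right _)
  have := Int.eq_zero_of_dvd_of_natAbs_lt_natAbs hkd (by omega)
  omega

lemma smul_pair_mem {H : AddSubgroup (ZMod n × ZMod n)} {a b : ZMod n} (hg : (a, b) ∈ H)
    (s : ℤ) : (s • a, s • b) ∈ H := by
  have := AddSubgroup.zsmul_mem H hg s
  rwa [Prod.smul_mk] at this

lemma f_surj (hn : n ≠ 0) (H : AddSubgroup (ZMod n × ZMod n)) :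
    ∃ i j k u, i ∣ n ∧ j ∣ n ∧ k ∣ i ∧ k ∣ j ∧ u < k ∧ Nat.gcd u k = 1 ∧
      H = f n i j k u ∧ H.map (AddMonoidHom.fst _ _) = A n i ∧
      H.map (AddMonoidHom.snd _ _) = A n j := by
  haveI : NeZero n := ⟨hn⟩
  obtain ⟨i, hi, h1⟩ := exists_eq_A hn (H.map (AddMonoidHom.fst _ _))
  obtain ⟨j, hj, h2⟩ := exists_eq_A hn (H.map (AddMonoidHom.snd _ _))
  have hi0 : i ≠ 0 := fun h0 => hn (Nat.eq_zero_of_zero_dvd (h0 ▸ hi))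
  have hj0 : j ≠ 0 := fun h0 => hn (Nat.eq_zero_of_zero_dvd (h0 ▸ hj))
  obtain ⟨m1, hm1, hH1⟩ := exists_eq_A hn (H.comap (AddMonoidHom.inl _ _))
  obtain ⟨m2, hm2, hH2⟩ := exists_eq_A hn (H.comap (AddMonoidHom.inr _ _))
  have hm10 : m1 ≠ 0 := fun h0 => hn (Nat.eq_zero_of_zero_dvd (h0 ▸ hm1))
  have hm20 : m2 ≠ 0 := fun h0 => hn (Nat.eq_zero_of_zero_dvd (h0 ▸ hm2))
  have hm1i : m1 ∣ i := by
    rw [← A_le_A hn hm1 hi, ← hH1, ← h1]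
    rintro x hx
    exact AddSubgroup.mem_map.mpr ⟨(x, 0), AddSubgroup.mem_comap.mp hx, rfl⟩
  have hm2j : m2 ∣ j := by
    rw [← A_le_A hn hm2 hj, ← hH2, ← h2]
    rintro y hy
    exact AddSubgroup.mem_map.mpr ⟨(0, y), AddSubgroup.mem_comap.mp hy, rfl⟩
  -- the two "cross" steps
  have key2 : ∀ x y : ZMod n, (x, y) ∈ H → ((j / m2) • x, 0) ∈ H := by
    intro x y hxy
    have hy : y ∈ A n j := h2 ▸ AddSubgroup.mem_map.mpr ⟨(x, y), hxy, rfl⟩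
    obtain ⟨t, ht⟩ := mem_zmultiples_iff.mp hy
    have hk2y : (j / m2) • y ∈ H.comap (AddMonoidHom.inr _ _) := by
      rw [hH2]
      refine mem_zmultiples_iff.mpr ⟨t, ?_⟩
      rw [← ht, smul_comm, nsmul_c hn (Nat.div_dvd_of_dvd hm2j) hj, Nat.div_div_self hm2j hj0]
    have hy' : ((0 : ZMod n), (j / m2) • y) ∈ H := AddSubgroup.mem_comap.mp hk2y
    have hxy' : ((j / m2) • x, (j / m2) • y) ∈ H := by
      have := AddSubgroup.nsmul_mem H hxy (j / m2)
      rwa [Prod.smul_mk] at this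
    have := sub_mem hxy' hy'
    rwa [Prod.mk_sub_mk, sub_zero, sub_self] at this
  have key1 : ∀ x y : ZMod n, (x, y) ∈ H → ((0 : ZMod n), (i / m1) • y) ∈ H := by
    intro x y hxy
    have hx : x ∈ A n i := h1 ▸ AddSubgroup.mem_map.mpr ⟨(x, y), hxy, rfl⟩
    obtain ⟨t, ht⟩ := mem_zmultiples_iff.mp hx
    have hk1x : (i / m1) • x ∈ H.comap (AddMonoidHom.inl _ _) := by
      rw [hH1]
      refine mem_zmultiples_iff.mpr ⟨t, ?_⟩
      rw [← ht, smul_comm, nsmul_c hn (Nat.div_dvd_of_dvd hm1i) hi, Nat.div_div_self hm1i hi0]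
    have hx' : ((i / m1) • x, (0 : ZMod n)) ∈ H := AddSubgroup.mem_comap.mp hk1x
    have hxy' : ((i / m1) • x, (i / m1) • y) ∈ H := by
      have := AddSubgroup.nsmul_mem H hxy (i / m1)
      rwa [Prod.smul_mk] at this
    have := sub_mem hxy' hx'
    rwa [Prod.mk_sub_mk, sub_zero, sub_self] at this
  -- k1 = i / m1 divides k2 = j / m2 and conversely
  have hk12 : i / m1 ∣ j / m2 := by
    -- apply key2 to a preimage of c n i
    have hci : c n i ∈ A n i := mem_zmultiples _
    rw [← h1] at hci
    obtain ⟨⟨x', y0⟩, hxy0, hx'⟩ := AddSubgroup.mem_map.mp hci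
    have hx'' : x' = c n i := hx'
    subst hx''
    have hmem : (j / m2) • c n i ∈ A n m1 := by
      rw [← hH1]
      exact AddSubgroup.mem_comap.mpr (key2 _ _ hxy0)
    have hle : zmultiples ((j / m2) • c n i) ≤ A n m1 := zmultiples_le.mpr hmem
    have hcard := card_dvd_of_le hle
    rw [Nat.card_zmultiples, addOrderOf_nsmul, addOrderOf_c hn hi, card_A hn hm1] at hcard
    -- hcard : i / Nat.gcd i (j / m2) ∣ m1
    have hgd : Nat.gcd i (j / m2) ∣ i := Nat.gcd_dvd_left _ _
    have h5 := nat_div_dvd_div hcard hm1i hm10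
    rw [Nat.div_div_self hgd hi0] at h5
    exact h5.trans (Nat.gcd_dvd_right _ _)
  have hk21 : j / m2 ∣ i / m1 := by
    have hcj : c n j ∈ A n j := mem_zmultiples _
    rw [← h2] at hcj
    obtain ⟨⟨x0, y'⟩, hxy0, hy'⟩ := AddSubgroup.mem_map.mp hcj
    have hy'' : y' = c n j := hy'
    subst hy''
    have hmem : (i / m1) • c n j ∈ A n m2 := by
      rw [← hH2]
      exact AddSubgroup.mem_comap.mpr (key1 _ _ hxy0)
    have hle : zmultiples ((i / m1) • c n j) ≤ A n m2 := zmultiples_le.mpr hmem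
    have hcard := card_dvd_of_le hle
    rw [Nat.card_zmultiples, addOrderOf_nsmul, addOrderOf_c hn hj, card_A hn hm2] at hcard
    have hgd : Nat.gcd j (i / m1) ∣ j := Nat.gcd_dvd_left _ _
    have h5 := nat_div_dvd_div hcard hm2j hm20
    rw [Nat.div_div_self hgd hj0] at h5
    exact h5.trans (Nat.gcd_dvd_right _ _)
  set k := j / m2 with hkdef
  have hk1k : i / m1 = k := Nat.dvd_antisymm hk12 hk21
  have hkj : k ∣ j := Nat.div_dvd_of_dvd hm2j
  have hki : k ∣ i := hk1k ▸ Nat.div_dvd_of_dvd hm1i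
  have hk0 : k ≠ 0 := by
    intro h0
    apply hj0
    rw [← Nat.div_mul_cancel hm2j, ← hkdef, h0, zero_mul]
  have hm2k : m2 = j / k := by
    rw [hkdef, Nat.div_div_self hm2j hj0]
  -- pick witnesses
  have hci : c n i ∈ A n i := mem_zmultiples _
  rw [← h1] at hci
  obtain ⟨⟨x', y0⟩, hxy0, hx'⟩ := AddSubgroup.mem_map.mp hci
  have hx'' : x' = c n i := hx'
  subst hx''
  have hcj : c n j ∈ A n j := mem_zmultiples _
  rw [← h2] at hcj
  obtain ⟨⟨x0, y'⟩, hx0y, hy'⟩ := AddSubgroup.mem_map.mp hcj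
  have hy'' : y' = c n j := hy'
  subst hy''
  have hy0A : y0 ∈ A n j := h2 ▸ AddSubgroup.mem_map.mpr ⟨(c n i, y0), hxy0, rfl⟩
  obtain ⟨w, hw⟩ := mem_zmultiples_iff.mp hy0A
  have hx0A : x0 ∈ A n i := h1 ▸ AddSubgroup.mem_map.mpr ⟨(x0, c n j), hx0y, rfl⟩
  obtain ⟨v, hv⟩ := mem_zmultiples_iff.mp hx0A
  -- membership of (0, (v*w-1) • c n j)
  have hsub : ((0 : ZMod n), (v * w - 1) • c n j) ∈ H := by
    have hvH : (v • c n i, (v * w) • c n j) ∈ H := by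
      have h6 := smul_pair_mem hxy0 v
      rwa [← hw, smul_smul] at h6
    have h7 := sub_mem hvH hx0y
    rw [Prod.mk_sub_mk, hv, sub_self] at h7
    have e : (v * w) • c n j - c n j = (v * w - 1) • c n j := by
      rw [sub_smul, one_smul]
    rwa [e] at h7
  have hmemm2 : (v * w - 1) • c n j ∈ A n m2 := by
    rw [← hH2]
    exact AddSubgroup.mem_comap.mpr hsub
  obtain ⟨t0, ht0⟩ := mem_zmultiples_iff.mp hmemm2
  have hct : (t0 * k) • c n j = (v * w - 1) • c n j := by
    rw [← ht0, hm2k, ← kzsmul_c hn hkj hj, smul_smul]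
  have hjvw : ((j : ℕ) : ℤ) ∣ (v * w - 1) - t0 * k := by
    rw [← addOrderOf_c hn hj, addOrderOf_dvd_iff_zsmul_eq_zero, sub_smul, hct, sub_self]
  have hkvw : ((k : ℕ) : ℤ) ∣ v * w - 1 := by
    have e : v * w - 1 = ((v * w - 1) - t0 * k) + t0 * k := by ring
    rw [e]
    exact dvd_add ((Int.natCast_dvd_natCast.mpr hkj).trans hjvw) ⟨t0, mul_comm _ _⟩
  -- define u
  set u := (w % (k : ℤ)).toNat with hudef
  have hkpos : (0 : ℤ) < (k : ℤ) := by exact_mod_cast Nat.pos_of_ne_zero hk0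
  have hwm1 : 0 ≤ w % (k : ℤ) := Int.emod_nonneg w (by exact_mod_cast hk0)
  have hwm2 : w % (k : ℤ) < k := Int.emod_lt_of_pos w hkpos
  have huw : (u : ℤ) = w % (k : ℤ) := Int.toNat_of_nonneg hwm1
  have hu : u < k := by omega
  have hkwu : ((k : ℕ) : ℤ) ∣ w - u := by
    rw [huw]
    exact Int.dvd_self_sub_of_emod_eq rfl
  obtain ⟨qw, hqw⟩ := hkwu
  have hkvu : ((k : ℕ) : ℤ) ∣ v * u - 1 := by
    have e : v * u - 1 = (v * w - 1) - v * (w - u) := by ring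
    rw [e]
    exact dvd_sub hkvw (Dvd.dvd.mul_left ⟨qw, hqw⟩ v)
  obtain ⟨q, hq⟩ := hkvu
  have hcop : Nat.gcd u k = 1 := by
    have hic : IsCoprime ((u : ℕ) : ℤ) ((k : ℕ) : ℤ) := ⟨v, -q, by linarith [hq]⟩
    rw [← Int.gcd_natCast_natCast]
    exact Int.isCoprime_iff_gcd_eq_one.mp hic
  refine ⟨i, j, k, u, hi, hj, hki, hkj, hu, hcop, ?_, h1, h2⟩
  -- H = f n i j k u
  ext ⟨x, y⟩
  constructor
  · intro hxy
    have hx : x ∈ A n i := h1 ▸ AddSubgroup.mem_map.mpr ⟨(x, y), hxy, rfl⟩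
    obtain ⟨s, hs⟩ := mem_zmultiples_iff.mp hx
    have h3 : (s • c n i, (s * w) • c n j) ∈ H := by
      have h6 := smul_pair_mem hxy0 s
      rwa [← hw, smul_smul] at h6
    have h4 : ((0 : ZMod n), y - (s * w) • c n j) ∈ H := by
      have h7 := sub_mem hxy h3
      rwa [Prod.mk_sub_mk, ← hs, sub_self] at h7
    have hmem2 : y - (s * w) • c n j ∈ A n m2 := by
      rw [← hH2]
      exact AddSubgroup.mem_comap.mpr h4
    obtain ⟨t, ht⟩ := mem_zmultiples_iff.mp hmem2
    have hy2 : y = (s * w + t * k) • c n j := by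
      have e1 : y - (s * w) • c n j = (t * k) • c n j := by
        rw [← ht, hm2k, ← kzsmul_c hn hkj hj, smul_smul]
      have e2 := sub_eq_iff_eq_add.mp e1
      rw [e2, add_smul, add_comm]
    refine mem_f.mpr ⟨s, t + s * qw, ?_⟩
    apply Prod.ext
    · exact hs.symm
    · show y = (s * u + (t + s * qw) * k) • c n j
      rw [hy2]
      congr 1
      linear_combination s * hqw
  · intro hxy
    obtain ⟨s, t, hst⟩ := mem_f.mp hxy
    have hxs : x = s • c n i := congrArg Prod.fst hst
    have hys : y = (s * u + t * k) • c n j := congrArg Prod.snd hst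
    have h3 : (s • c n i, (s * w) • c n j) ∈ H := by
      have h6 := smul_pair_mem hxy0 s
      rwa [← hw, smul_smul] at h6
    have h4 : ((0 : ZMod n), y - (s * w) • c n j) ∈ H := by
      have hmem2 : y - (s * w) • c n j ∈ A n m2 := by
        refine mem_zmultiples_iff.mpr ⟨t - s * qw, ?_⟩
        rw [hm2k, ← kzsmul_c hn hkj hj, smul_smul, hys]
        rw [← sub_smul]
        congr 1
        linear_combination s * hqw
      rw [← hH2] at hmem2
      exact AddSubgroup.mem_comap.mp hmem2
    have := add_mem h3 h4
    rwa [Prod.mk_add_mk, add_zero, add_sub_cancel, ← hxs] at this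

lemma gcd_div_eq {E i j : ℕ} (hE : E ≠ 0) (hi : i ∣ E) (hj : j ∣ E) :
    Nat.gcd (E / i) (E / j) = E / Nat.lcm i j := by
  have hlcmE : Nat.lcm i j ∣ E := Nat.lcm_dvd hi hj
  have hlcm0 : Nat.lcm i j ≠ 0 := fun h0 => hE (Nat.eq_zero_of_zero_dvd (h0 ▸ hlcmE))
  apply Nat.dvd_antisymm
  · rw [Nat.dvd_div_iff_mul_dvd hlcmE]
    have h1 : i * Nat.gcd (E / i) (E / j) ∣ E := by
      rw [← Nat.dvd_div_iff_mul_dvd hi]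
      exact Nat.gcd_dvd_left _ _
    have h2 : j * Nat.gcd (E / i) (E / j) ∣ E := by
      rw [← Nat.dvd_div_iff_mul_dvd hj]
      exact Nat.gcd_dvd_right _ _
    have h3 := Nat.lcm_dvd h1 h2
    rw [mul_comm i _, mul_comm j _, Nat.lcm_mul_left] at h3
    rwa [mul_comm] at h3
  · exact Nat.dvd_gcd (nat_div_dvd_div (Nat.dvd_lcm_left _ _) hlcmE hlcm0)
      (nat_div_dvd_div (Nat.dvd_lcm_right _ _) hlcmE hlcm0)

lemma lcm_eq_iff {E i j : ℕ} (hE : E ≠ 0) (hi : i ∣ E) (hj : j ∣ E) :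
    Nat.lcm i j = E ↔ Nat.gcd (E / i) (E / j) = 1 := by
  rw [gcd_div_eq hE hi hj]
  have hlcmE : Nat.lcm i j ∣ E := Nat.lcm_dvd hi hj
  constructor
  · rintro rfl
    exact Nat.div_self (Nat.pos_of_ne_zero hE)
  · intro h
    have := Nat.eq_mul_of_div_eq_right hlcmE h
    omega

/-- The parameter finset. -/
def P (E : ℕ) : Finset (Σ _ : ℕ, Σ _ : ℕ, Σ _ : ℕ, ℕ) :=
  E.divisors.sigma fun i => E.divisors.sigma fun j =>
    ((Nat.gcd i j).divisors.filter fun _ => Nat.lcm i j = E).sigma fun k =>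
      (Finset.range k).filter fun u => Nat.gcd u k = 1

lemma card_P {E : ℕ} (hE : E ≠ 0) :
    (P E).card = ∑ i ∈ E.divisors, ∑ j ∈ E.divisors,
      if Nat.gcd (E / i) (E / j) = 1 then Nat.gcd i j else 0 := by
  rw [P, Finset.card_sigma]
  refine Finset.sum_congr rfl fun i hi => ?_
  rw [Finset.card_sigma]
  refine Finset.sum_congr rfl fun j hj => ?_
  rw [Finset.card_sigma]
  have htot : ∀ k : ℕ, ((Finset.range k).filter fun u => Nat.gcd u k = 1).card
      = Nat.totient k := by
    intro k
    rw [Nat.totient]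
    congr 1
    apply Finset.filter_congr
    intro x _
    simp [Nat.Coprime, Nat.gcd_comm]
  simp_rw [htot]
  rw [Finset.filter_const]
  have hiE : i ∣ E := (Nat.mem_divisors.mp hi).1
  have hjE : j ∣ E := (Nat.mem_divisors.mp hj).1
  by_cases h : Nat.lcm i j = E
  · rw [if_pos h, if_pos ((lcm_eq_iff hE hiE hjE).mp h), Nat.sum_totient]
  · rw [if_neg h, if_neg (fun hc => h ((lcm_eq_iff hE hiE hjE).mpr hc)), Finset.sum_empty]

lemma mem_P_elim {E i j k u : ℕ} (h : (⟨i, j, k, u⟩ : Σ _ : ℕ, Σ _ : ℕ, Σ _ : ℕ, ℕ) ∈ P E) :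
    i ∣ E ∧ j ∣ E ∧ Nat.lcm i j = E ∧ k ∣ i ∧ k ∣ j ∧ u < k ∧ Nat.gcd u k = 1 ∧ E ≠ 0 := by
  simp only [P, Finset.mem_sigma, Finset.mem_filter, Nat.mem_divisors, Finset.mem_range] at h
  obtain ⟨⟨hiE, hE0⟩, ⟨hjE, -⟩, ⟨⟨hkg, -⟩, hlcm⟩, hu, hcop⟩ := h
  exact ⟨hiE, hjE, hlcm, hkg.trans (Nat.gcd_dvd_left _ _), hkg.trans (Nat.gcd_dvd_right _ _),
    hu, hcop, hE0⟩

lemma mem_P_intro {E i j k u : ℕ} (hE0 : E ≠ 0) (hi : i ∣ E) (hj : j ∣ E)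
    (hlcm : Nat.lcm i j = E) (hki : k ∣ i) (hkj : k ∣ j) (hu : u < k)
    (hcop : Nat.gcd u k = 1) :
    (⟨i, j, k, u⟩ : Σ _ : ℕ, Σ _ : ℕ, Σ _ : ℕ, ℕ) ∈ P E := by
  have hi0 : i ≠ 0 := fun h0 => hE0 (Nat.eq_zero_of_zero_dvd (h0 ▸ hi))
  simp only [P, Finset.mem_sigma, Finset.mem_filter, Nat.mem_divisors, Finset.mem_range]
  exact ⟨⟨hi, hE0⟩, ⟨hj, hE0⟩, ⟨⟨Nat.dvd_gcd hki hkj, fun h0 =>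
    hi0 (Nat.eq_zero_of_gcd_eq_zero_left h0)⟩, hlcm⟩, hu, hcop⟩

end Stmt13

theorem stmt_13 (n E : ℕ) (hn : 1 ≤ n) (hE : E ∣ n) :
    Nat.card {H : AddSubgroup (ZMod n × ZMod n) // AddMonoid.exponent H = E} =
      ∑ i ∈ E.divisors, ∑ j ∈ E.divisors,
        if Nat.gcd (E / i) (E / j) = 1 then Nat.gcd i j else 0 := by
  classical
  have hn0 : n ≠ 0 := by omega
  have hE0 : E ≠ 0 := fun h0 => hn0 (Nat.eq_zero_of_zero_dvd (h0 ▸ hE))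
  set F := Stmt13.P E with hF
  have hbij : Set.BijOn
      (fun p : (Σ _ : ℕ, Σ _ : ℕ, Σ _ : ℕ, ℕ) => Stmt13.f n p.1 p.2.1 p.2.2.1 p.2.2.2)
      ↑F {H : AddSubgroup (ZMod n × ZMod n) | AddMonoid.exponent H = E} := by
    refine ⟨?_, ?_, ?_⟩
    · rintro ⟨i, j, k, u⟩ hp
      obtain ⟨hiE, hjE, hlcm, hki, hkj, hu, hcop, -⟩ :=
        Stmt13.mem_P_elim (Finset.mem_coe.mp hp)
      have hi : i ∣ n := hiE.trans hE
      have hj : j ∣ n := hjE.trans hE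
      show AddMonoid.exponent (Stmt13.f n i j k u) = E
      rw [Stmt13.exponent_eq_lcm hn0 hi hj _ Stmt13.map_fst_f (Stmt13.map_snd_f hcop), hlcm]
    · rintro ⟨i, j, k, u⟩ hp ⟨i', j', k', u'⟩ hq heq
      obtain ⟨hiE, hjE, hlcm, hki, hkj, hu, hcop, -⟩ :=
        Stmt13.mem_P_elim (Finset.mem_coe.mp hp)
      obtain ⟨hiE', hjE', hlcm', hki', hkj', hu', hcop', -⟩ :=
        Stmt13.mem_P_elim (Finset.mem_coe.mp hq)
      obtain ⟨e1, e2, e3, e4⟩ := Stmt13.f_inj hn0 (hiE.trans hE) (hjE.trans hE) hki hkj hu hcop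
        (hiE'.trans hE) (hjE'.trans hE) hki' hkj' hu' hcop' heq
      subst e1; subst e2; subst e3; subst e4
      rfl
    · rintro H hH
      obtain ⟨i, j, k, u, hi, hj, hki, hkj, hu, hcop, hHf, h1, h2⟩ := Stmt13.f_surj hn0 H
      have hlcm : Nat.lcm i j = E := by
        rw [← hH]
        exact (Stmt13.exponent_eq_lcm hn0 hi hj H h1 h2).symm
      exact ⟨⟨i, j, k, u⟩, Finset.mem_coe.mpr (Stmt13.mem_P_intro hE0
        (hlcm ▸ Nat.dvd_lcm_left i j) (hlcm ▸ Nat.dvd_lcm_right i j) hlcm hki hkj hu hcop),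
        hHf.symm⟩
  have hcardeq : Nat.card {H : AddSubgroup (ZMod n × ZMod n) // AddMonoid.exponent H = E}
      = F.card := by
    have h3 : Nat.card ↥{H : AddSubgroup (ZMod n × ZMod n) | AddMonoid.exponent H = E}
        = Nat.card ↥(↑F : Set (Σ _ : ℕ, Σ _ : ℕ, Σ _ : ℕ, ℕ)) :=
      Nat.card_congr (Set.BijOn.equiv _ hbij).symm
    rw [show (Nat.card ↥(↑F : Set (Σ _ : ℕ, Σ _ : ℕ, Σ _ : ℕ, ℕ))) = F.card by
      rw [Nat.card_coe_set_eq, Set.ncard_coe_finset]] at h3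
    exact h3
  rw [hcardeq, hF, Stmt13.card_P hE0]
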